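/- Define s_m = d_{m+1} − d_m. Then the sequence (s_j)_{j≥0} is the fixed point of the substitution q ↦ b(q) with initial value s_0 = 0: for every m ≥ 0 and every i with 0 ≤ i ≤ p−1, one has s_{pm+i} = b(s_m)_i, where for q ∈ {0,…,p−2} the block b(q) of length p is given by b(q)_i = i if i ≤ q and b(q)_i = i−1 if i > q, i.e., b(q) is the increasing sequence 0, 1, …, p−2 with the value q repeated twice in a row. -/

import Mathlib

open MeasureTheory
open scoped NNReal ENNReal

namespace Chacon

/-- The space of digit sequences with digits in `{0, …, p-1}`. -/
def Gamma (p : ℕ) : Set (ℕ → ℕ) := {x | ∀ i, x i < p}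

/-- `Γ*`: sequences with digits `< p` having infinitely many coordinates `≠ p - 1`. -/
def GammaStar (p : ℕ) : Set (ℕ → ℕ) :=
  {x | (∀ i, x i < p) ∧ {i | x i ≠ p - 1}.Infinite}

/-- The least index `i` with `x i ≠ p - 1`. -/
noncomputable def firstNot (p : ℕ) (x : ℕ → ℕ) : ℕ :=
  sInf {i | x i ≠ p - 1}

/-- `φ(x) = x_i` where `i` is the least index with `x_i ≠ p - 1`. -/
noncomputable def phi (p : ℕ) (x : ℕ → ℕ) : ℕ :=
  x (firstNot p x)

/-- The odometer `S` (addition of `1` with carry): the initial run of digits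
`p - 1` is replaced by zeros, and the first digit `≠ p - 1` is increased by one. -/
noncomputable def odo (p : ℕ) (x : ℕ → ℕ) : ℕ → ℕ :=
  fun i =>
    if i < firstNot p x then 0
    else if i = firstNot p x then x i + 1
    else x i

/-- `φ^(m)(x) = ∑_{j=0}^{m-1} φ(S^j x)`. -/
noncomputable def phiSum (p m : ℕ) (x : ℕ → ℕ) : ℕ :=
  ∑ j ∈ Finset.range m, phi p ((odo p)^[j] x)

/-- The base-`p` digit sequence of a real number `u`. -/
noncomputable def digitsOf (p : ℕ) (u : ℝ) : ℕ → ℕ :=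
  fun i => (⌊u * (p : ℝ) ^ (i + 1)⌋).toNat % p

/-- `λ`: the product probability measure on digit sequences under which the
coordinates are i.i.d., uniformly distributed in `{0, …, p-1}`; it is realized
concretely as the distribution of the base-`p` digit sequence of a uniformly
distributed random point of `[0,1)`. -/
noncomputable def lam (p : ℕ) : Measure (ℕ → ℕ) :=
  Measure.map (digitsOf p) (volume.restrict (Set.Ico (0 : ℝ) 1))

/-- `π_m(j) = λ({x : φ^(m)(x) = j})`. -/
noncomputable def pim (p m j : ℕ) : ℝ≥0∞ :=
  lam p {x | phiSum p m x = j}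

/-- `P_m^p(t) = ∑_{j ≥ 0} π_m(j) t^j`, a real polynomial
(the sum is over `0 ≤ j ≤ m (p-2)` since `0 ≤ φ^(m) ≤ m (p-2)` a.s.). -/
noncomputable def P (p m : ℕ) (t : ℝ) : ℝ :=
  ∑ j ∈ Finset.range (m * (p - 2) + 1), (pim p m j).toReal * t ^ j

/-- The `n`-th triangular number `Δ_n = n (n+1) / 2`. -/
def tri (n : ℕ) : ℕ := n * (n + 1) / 2

/-- The degree `D_m` of `P_m^p`: the largest `j` with `π_m(j) ≠ 0`. -/
noncomputable def D (p m : ℕ) : ℕ := sSup {j | pim p m j ≠ 0}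

/-- The lower degree `d_m` of `P_m^p`: the least `j` with `π_m(j) ≠ 0`. -/
noncomputable def d (p m : ℕ) : ℕ := sInf {j | pim p m j ≠ 0}


/-- `s_m = d_{m+1} - d_m`. -/
noncomputable def sseq (p m : ℕ) : ℕ := d p (m + 1) - d p m

/-- The substitution block `b(q)` of length `p`: the increasing sequence
`0, 1, …, p-2` with the value `q` repeated twice in a row. -/
def blockLower (q i : ℕ) : ℕ := if i ≤ q then i else i - 1




/-- `ρ(j) = j % p` unless the residue is `p-1`, in which case `0`. -/
def rho (p j : ℕ) : ℕ := if j % p = p - 1 then 0 else j % p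

/-- first non-`(p-1)` digit of `n` in base `p`. -/
def natphi (p n : ℕ) : ℕ :=
  if h : 2 ≤ p ∧ n % p = p - 1 then natphi p (n / p) else n % p
termination_by n
decreasing_by
  refine Nat.div_lt_self ?_ h.1
  rcases Nat.eq_zero_or_pos n with h0 | h0
  · exfalso; subst h0; simp at h; omega
  · exact h0

theorem natphi_eq (p n : ℕ) (hp : 2 ≤ p) :
    natphi p n = if n % p = p - 1 then natphi p (n / p) else n % p := by
  rw [natphi]
  by_cases h : n % p = p - 1 <;> simp [h, hp]

theorem natphi_eq_of_ne (p n : ℕ) (hp : 2 ≤ p) (h : n % p ≠ p - 1) :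
    natphi p n = n % p := by rw [natphi_eq p n hp, if_neg h]

theorem natphi_eq_of_eq (p n : ℕ) (hp : 2 ≤ p) (h : n % p = p - 1) :
    natphi p n = natphi p (n / p) := by rw [natphi_eq p n hp, if_pos h]

/-- window sums of `natphi`. -/
def Wsum (p n m : ℕ) : ℕ := ∑ j ∈ Finset.range m, natphi p (n + j)

/-- fixed point of the substitution. -/
def sFix (p m : ℕ) : ℕ :=
  if h : 2 ≤ p ∧ m ≠ 0 then blockLower (sFix p (m / p)) (m % p) else 0
termination_by m
decreasing_by exact Nat.div_lt_self (Nat.pos_of_ne_zero h.2) h.1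

theorem sFix_zero (p : ℕ) : sFix p 0 = 0 := by rw [sFix]; simp

theorem sFix_eq (p m : ℕ) (hp : 2 ≤ p) :
    sFix p m = blockLower (sFix p (m / p)) (m % p) := by
  rcases Nat.eq_zero_or_pos m with h0 | h0
  · subst h0; simp [sFix_zero, blockLower]
  · rw [sFix]; simp [hp, show m ≠ 0 by omega]

def Esum (p m : ℕ) : ℕ := ∑ j ∈ Finset.range m, sFix p j

def Tp (p : ℕ) : ℕ := ∑ j ∈ Finset.range (p - 1), j

theorem sFix_le (p m : ℕ) (hp : 2 ≤ p) : sFix p m ≤ p - 2 := by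
  induction m using Nat.strong_induction_on with
  | _ m ih =>
    rcases Nat.eq_zero_or_pos m with h0 | h0
    · subst h0; rw [sFix_zero]; omega
    · rw [sFix_eq p m hp]
      have h1 : sFix p (m / p) ≤ p - 2 := ih _ (Nat.div_lt_self h0 hp)
      have h2 : m % p ≤ p - 1 := by
        have := Nat.mod_lt m (show 0 < p by omega); omega
      unfold blockLower
      split <;> omega

theorem rho_period (p j : ℕ) : rho p (j + p) = rho p j := by
  unfold rho; rw [Nat.add_mod_right]

theorem rho_period_mul (p j k : ℕ) : rho p (j + p * k) = rho p j := by
  induction k with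
  | zero => simp
  | succ k ih => rw [show j + p * (k+1) = (j + p * k) + p by ring, rho_period, ih]

/-- sum of `rho` over a full period. -/
theorem sum_rho_period (p : ℕ) (hp : 2 ≤ p) (n : ℕ) :
    ∑ t ∈ Finset.range p, rho p (n + t) = Tp p := by
  induction n with
  | zero =>
    obtain ⟨r, rfl⟩ : ∃ r, p = r + 1 := ⟨p - 1, by omega⟩
    unfold Tp
    rw [Finset.sum_range_succ]
    simp only [Nat.add_sub_cancel, zero_add]
    have h1 : rho (r+1) r = 0 := by
      unfold rho; rw [Nat.mod_eq_of_lt (by omega), if_pos (by omega)]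
    rw [h1, add_zero]
    apply Finset.sum_congr rfl
    intro t ht
    simp only [Finset.mem_range] at ht
    unfold rho
    rw [Nat.mod_eq_of_lt (by omega), if_neg (by omega)]
  | succ n ih =>
    have key : ∑ t ∈ Finset.range (p + 1), rho p (n + t)
        = rho p n + ∑ t ∈ Finset.range p, rho p (n + 1 + t) := by
      rw [Finset.sum_range_succ']
      simp only [add_zero]
      rw [add_comm]
      congr 1
      apply Finset.sum_congr rfl
      intro t _; congr 1; omega
    rw [Finset.sum_range_succ, ih] at key
    have hper : rho p (n + p) = rho p n := rho_period p n
    rw [hper] at key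
    omega

theorem sum_rho_block (p : ℕ) (hp : 2 ≤ p) (n m1 i : ℕ) :
    ∑ t ∈ Finset.range (p * m1 + i), rho p (n + t)
      = m1 * Tp p + ∑ t ∈ Finset.range i, rho p (n + t) := by
  induction m1 with
  | zero => simp
  | succ m1 ih =>
    have harr : p * (m1 + 1) + i = (p * m1 + i) + p := by ring
    rw [harr, Finset.sum_range_add, ih]
    have h2 : ∑ t ∈ Finset.range p, rho p (n + (p * m1 + i + t)) = Tp p := by
      calc ∑ t ∈ Finset.range p, rho p (n + (p * m1 + i + t))
          = ∑ t ∈ Finset.range p, rho p (n + i + t) := by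
            apply Finset.sum_congr rfl
            intro t _
            rw [show n + (p * m1 + i + t) = (n + i + t) + p * m1 by ring, rho_period_mul]
        _ = Tp p := sum_rho_period p hp (n + i)
    rw [h2]; ring

/-- Decomposition: window sum = residue part + window sum one level up. -/
theorem Wsum_dec (p : ℕ) (hp : 2 ≤ p) (n m : ℕ) :
    Wsum p n m = (∑ t ∈ Finset.range m, rho p (n + t))
      + Wsum p (n / p) ((n + m) / p - n / p) := by
  induction m with
  | zero => simp [Wsum]
  | succ m ih =>
    have hple : (0:ℕ) < p := by omega
    unfold Wsum at *
    rw [Finset.sum_range_succ, Finset.sum_range_succ, ih]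
    set q := (n + m) / p with hq
    set r := (n + m) % p with hr
    have hqr : n + m = p * q + r := by rw [hq, hr]; exact (Nat.div_add_mod (n+m) p).symm
    have hrlt : r < p := Nat.mod_lt _ hple
    have hmono : n / p ≤ q := by rw [hq]; exact Nat.div_le_div_right (by omega)
    have hsucc : (n + (m+1)) / p = q + (r+1)/p := by
      rw [show n + (m+1) = (r+1) + p * q by omega, Nat.add_mul_div_left _ _ hple]
      exact add_comm _ _
    by_cases hcase : r = p - 1
    · have hdiv : (n + (m+1)) / p = q + 1 := by
        rw [hsucc, show r + 1 = p by omega, Nat.div_self hple]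
      have hrho : rho p (n + m) = 0 := by unfold rho; rw [← hr, if_pos hcase]
      have hphi : natphi p (n + m) = natphi p q := by
        rw [natphi_eq_of_eq p (n+m) hp (by rw [← hr]; exact hcase), ← hq]
      rw [hdiv]
      have hcnt : q + 1 - n / p = (q - n / p) + 1 := by omega
      rw [hcnt, Finset.sum_range_succ, hrho, hphi]
      have hqq : n / p + (q - n / p) = q := by omega
      rw [hqq]
      ring
    · have hdiv : (n + (m+1)) / p = q := by
        rw [hsucc, Nat.div_eq_of_lt (by omega), add_zero]
      have hrho : rho p (n + m) = r := by unfold rho; rw [← hr, if_neg hcase]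
      have hphi : natphi p (n + m) = r := by
        rw [natphi_eq_of_ne p (n+m) hp (by rw [← hr]; exact hcase), hr]
      rw [hdiv, hrho, hphi]
      ring

/-- partial block sums. -/
def Csum (q i : ℕ) : ℕ := ∑ t ∈ Finset.range i, blockLower q t

theorem Csum_eq (q k : ℕ) :
    Csum q (k + 1) = (∑ j ∈ Finset.range k, j) + min k q := by
  induction k with
  | zero => simp [Csum, blockLower]
  | succ k ih =>
    unfold Csum at *
    rw [Finset.sum_range_succ, ih, Finset.sum_range_succ]
    unfold blockLower
    split <;> omega



theorem sum_shift (k : ℕ) :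
    ∑ j ∈ Finset.range k, (j - 1) = ∑ j ∈ Finset.range (k - 1), j := by
  induction k with
  | zero => simp
  | succ k ih =>
    rw [Finset.sum_range_succ, ih]
    simp only [Nat.add_sub_cancel]
    rcases Nat.eq_zero_or_pos k with h0 | h0
    · subst h0; simp
    · have h2 := Finset.sum_range_succ (fun j => j) (k-1)
      rw [show k - 1 + 1 = k by omega] at h2
      omega

theorem sFix_block (p : ℕ) (hp : 2 ≤ p) (m1 t : ℕ) (ht : t < p) :
    sFix p (p * m1 + t) = blockLower (sFix p m1) t := by
  rw [sFix_eq p _ hp, Nat.mul_add_div (by omega), Nat.mul_add_mod,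
    Nat.div_eq_of_lt ht, Nat.mod_eq_of_lt ht, add_zero]

theorem sum_block (p : ℕ) (hp : 2 ≤ p) (q : ℕ) (hq : q ≤ p - 2) :
    ∑ t ∈ Finset.range p, blockLower q t = Tp p + q := by
  have h := Csum_eq q (p - 1)
  unfold Csum at h
  rw [show p - 1 + 1 = p by omega] at h
  rw [h]
  unfold Tp
  rw [show min (p-1) q = q by omega]

theorem Esum_succ (p m : ℕ) : Esum p (m + 1) = Esum p m + sFix p m :=
  Finset.sum_range_succ _ _

theorem Esum_mul (p : ℕ) (hp : 2 ≤ p) (m1 : ℕ) :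
    Esum p (p * m1) = m1 * Tp p + Esum p m1 := by
  induction m1 with
  | zero => simp [Esum]
  | succ m1 ih =>
    have h1 : p * (m1 + 1) = p * m1 + p := by ring
    rw [h1]
    unfold Esum at *
    rw [Finset.sum_range_add, ih]
    have h2 : ∑ t ∈ Finset.range p, sFix p (p * m1 + t)
        = ∑ t ∈ Finset.range p, blockLower (sFix p m1) t := by
      apply Finset.sum_congr rfl
      intro t ht
      exact sFix_block p hp m1 t (Finset.mem_range.mp ht)
    rw [h2, sum_block p hp _ (sFix_le p m1 hp), Finset.sum_range_succ]
    ring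

theorem Esum_block (p : ℕ) (hp : 2 ≤ p) (m1 i : ℕ) (hi : i ≤ p) :
    Esum p (p * m1 + i) = m1 * Tp p + Esum p m1 + Csum (sFix p m1) i := by
  unfold Esum Csum
  rw [Finset.sum_range_add]
  have h2 : ∑ t ∈ Finset.range i, sFix p (p * m1 + t)
      = ∑ t ∈ Finset.range i, blockLower (sFix p m1) t := by
    apply Finset.sum_congr rfl
    intro t ht
    exact sFix_block p hp m1 t (by have := Finset.mem_range.mp ht; omega)
  rw [h2]
  have := Esum_mul p hp m1
  unfold Esum at this
  omega

theorem rho_lt (p : ℕ) (hp : 2 ≤ p) (n t a : ℕ) (ha : n % p = a) (hlt : a + t < p - 1) :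
    rho p (n + t) = a + t := by
  have h1 : (n + t) % p = a + t := by
    rw [Nat.add_mod, ha, Nat.mod_eq_of_lt (show t < p by omega),
      Nat.mod_eq_of_lt (show a + t < p by omega)]
  unfold rho
  rw [h1, if_neg (by omega)]

theorem rho_wrap (p : ℕ) (hp : 2 ≤ p) (n t a : ℕ) (ha : n % p = a) (ht : t < p) (h1 : p ≤ a + t)
    (h2 : a + t < 2 * p - 1) : rho p (n + t) = a + t - p := by
  have hmod : (n + t) % p = a + t - p := by
    rw [Nat.add_mod, ha, Nat.mod_eq_of_lt (show t < p by omega)]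
    rw [Nat.mod_eq_sub_mod h1, Nat.mod_eq_of_lt (by omega)]
  unfold rho
  rw [hmod, if_neg (by omega)]

theorem rho_top (p : ℕ) (hp : 2 ≤ p) (n a : ℕ) (ha : n % p = a) (h1 : a = p - 1) :
    rho p n = 0 := by
  unfold rho
  rw [ha, if_pos h1]

/-- Clean decomposition with explicit quotient/remainder. -/
theorem Wsum_dec' (p : ℕ) (hp : 2 ≤ p) (n' a m1 i : ℕ) (ha : a < p) (hi : i < p) :
    Wsum p (p * n' + a) (p * m1 + i)
      = m1 * Tp p + (∑ t ∈ Finset.range i, rho p (a + t))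
        + Wsum p n' (m1 + (a + i) / p) := by
  have hple : 0 < p := by omega
  set n := p * n' + a with hn
  set m := p * m1 + i with hm
  have hdivn : n / p = n' := by
    rw [hn, Nat.mul_add_div hple, Nat.div_eq_of_lt ha, add_zero]
  have hdivnm : (n + m) / p = (n' + m1) + (a + i) / p := by
    rw [show n + m = (a + i) + p * (n' + m1) by rw [hn, hm]; ring,
      Nat.add_mul_div_left _ _ hple]
    ring
  have hrho : ∑ t ∈ Finset.range m, rho p (n + t)
      = m1 * Tp p + ∑ t ∈ Finset.range i, rho p (a + t) := by
    rw [hm, sum_rho_block p hp n m1 i]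
    congr 1
    apply Finset.sum_congr rfl
    intro t _
    rw [show n + t = (a + t) + p * n' by rw [hn]; ring, rho_period_mul]
  rw [Wsum_dec p hp n m, hrho, hdivn, hdivnm]
  generalize (a + i) / p = k
  have harg : n' + m1 + k - n' = m1 + k := by omega
  rw [harg]

/-- Lower bound: every window sum is at least `Esum`. -/
theorem Esum_le_Wsum (p : ℕ) (hp : 3 ≤ p) : ∀ m n, Esum p m ≤ Wsum p n m := by
  have hp2 : 2 ≤ p := by omega
  have hple : 0 < p := by omega
  intro m
  induction m using Nat.strong_induction_on with
  | _ m ih =>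
    intro n
    rcases Nat.lt_or_ge m 2 with hm2 | hm2
    · interval_cases m
      · simp [Esum]
      · have h0 : Esum p 1 = 0 := by simp [Esum, sFix_zero]
        rw [h0]; exact Nat.zero_le _
    · obtain ⟨m1, i, hilt, hmm⟩ : ∃ m1 i, i < p ∧ p * m1 + i = m :=
        ⟨m / p, m % p, Nat.mod_lt _ hple, Nat.div_add_mod m p⟩
      obtain ⟨n', a, halt, hnn⟩ : ∃ n' a, a < p ∧ p * n' + a = n :=
        ⟨n / p, n % p, Nat.mod_lt _ hple, Nat.div_add_mod n p⟩
      have hp3m : 3 * m1 ≤ p * m1 := Nat.mul_le_mul_right m1 hp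
      rw [← hmm, ← hnn, Wsum_dec' p hp2 n' a m1 i halt hilt]
      have hE : Esum p (p * m1 + i) = m1 * Tp p + Esum p m1 + Csum (sFix p m1) i :=
        Esum_block p hp2 m1 i (by omega)
      rw [hE]
      rcases Nat.eq_zero_or_pos i with hi0 | hi0
      · subst hi0
        have hk0 : (a + 0) / p = 0 := by rw [add_zero]; exact Nat.div_eq_of_lt halt
        rw [hk0, add_zero]
        have hIH := ih m1 (by omega) n'
        simp only [Csum, Finset.range_zero, Finset.sum_empty, add_zero]
        omega
      · have hC : Csum (sFix p m1) i
            = (∑ j ∈ Finset.range (i-1), j) + min (i-1) (sFix p m1) := by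
          have h := Csum_eq (sFix p m1) (i - 1)
          rw [show i - 1 + 1 = i by omega] at h
          exact h
        rcases Nat.lt_or_ge (a + i) p with hcase | hcase
        · -- no wrap
          have hk0 : (a + i) / p = 0 := Nat.div_eq_of_lt hcase
          rw [hk0, add_zero]
          have hIH := ih m1 (by omega) n'
          have hrho : ∀ t ∈ Finset.range i, t ≤ rho p (a + t) := by
            intro t ht
            simp only [Finset.mem_range] at ht
            rw [rho_lt p hp2 a t a (Nat.mod_eq_of_lt halt) (by omega)]
            omega
          have hb : ∑ t ∈ Finset.range i, t ≤ ∑ t ∈ Finset.range i, rho p (a + t) :=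
            Finset.sum_le_sum hrho
          have hsplit : ∑ t ∈ Finset.range i, t
              = (∑ t ∈ Finset.range (i-1), t) + (i - 1) := by
            have h := Finset.sum_range_succ (fun t => t) (i - 1)
            rw [show i - 1 + 1 = i by omega] at h
            exact h
          rw [hC]
          have hmin : min (i-1) (sFix p m1) ≤ i - 1 := Nat.min_le_left _ _
          omega
        · -- wrap
          have hk0 : (a + i) / p = 1 := by
            have h2 : (a + i) / p < 2 := (Nat.div_lt_iff_lt_mul hple).mpr (by omega)
            have h3 : 1 ≤ (a + i) / p := (Nat.le_div_iff_mul_le hple).mpr (by omega)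
            omega
          rw [hk0]
          have hIH := ih (m1 + 1) (by omega) n'
          have hE1 : Esum p (m1 + 1) = Esum p m1 + sFix p m1 := Esum_succ p m1
          set ts := p - 1 - a with hts
          have hts2 : ts < i := by omega
          have key : ∑ j ∈ Finset.range (i-1), j ≤ ∑ t ∈ Finset.range i, rho p (a + t) := by
            have claim1 : ∀ t ∈ Finset.range i,
                (if t < ts then i - 1 - ts + t else t - ts - 1) ≤ rho p (a + t) := by
              intro t ht
              simp only [Finset.mem_range] at ht
              by_cases hc : t < ts
              · rw [if_pos hc, rho_lt p hp2 a t a (Nat.mod_eq_of_lt halt) (by omega)]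
                omega
              · rw [if_neg hc]
                rcases Nat.eq_or_lt_of_le (Nat.ge_of_not_lt hc) with he | hlt2
                · omega
                · rw [rho_wrap p hp2 a t a (Nat.mod_eq_of_lt halt) (by omega) (by omega)
                    (by omega)]
                  omega
            have claim2 : ∑ t ∈ Finset.range i,
                (if t < ts then i - 1 - ts + t else t - ts - 1)
                = ∑ j ∈ Finset.range (i-1), j := by
              rw [Finset.range_eq_Ico,
                ← Finset.sum_Ico_consecutive _ (Nat.zero_le ts) (le_of_lt hts2)]
              have hA : (∑ t ∈ Finset.Ico 0 ts,
                    (if t < ts then i - 1 - ts + t else t - ts - 1))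
                  = ∑ t ∈ Finset.range ts, (i - 1 - ts + t) := by
                rw [← Finset.range_eq_Ico]
                apply Finset.sum_congr rfl
                intro t ht
                simp only [Finset.mem_range] at ht
                rw [if_pos ht]
              have hB : (∑ t ∈ Finset.Ico ts i,
                    (if t < ts then i - 1 - ts + t else t - ts - 1))
                  = ∑ j ∈ Finset.range (i - 1 - ts), j := by
                rw [Finset.sum_Ico_eq_sum_range]
                calc ∑ j ∈ Finset.range (i - ts),
                      (if ts + j < ts then i - 1 - ts + (ts + j) else ts + j - ts - 1)
                    = ∑ j ∈ Finset.range (i - ts), (j - 1) := by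
                      apply Finset.sum_congr rfl
                      intro j _
                      rw [if_neg (by omega)]
                      omega
                  _ = ∑ j ∈ Finset.range (i - ts - 1), j := sum_shift _
                  _ = ∑ j ∈ Finset.range (i - 1 - ts), j := by
                      rw [show i - ts - 1 = i - 1 - ts by omega]
              rw [hA, hB]
              have hR : ∑ j ∈ Finset.range (i-1), j
                  = (∑ j ∈ Finset.range (i - 1 - ts), j)
                    + ∑ t ∈ Finset.range ts, (i - 1 - ts + t) := by
                rw [Finset.range_eq_Ico,
                  ← Finset.sum_Ico_consecutive (fun (j:ℕ) => j) (Nat.zero_le (i - 1 - ts))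
                    (show i - 1 - ts ≤ i - 1 by omega),
                  ← Finset.range_eq_Ico, Finset.sum_Ico_eq_sum_range]
                congr 1
                rw [show i - 1 - (i - 1 - ts) = ts by omega]
              rw [hR]
              omega
            calc ∑ j ∈ Finset.range (i-1), j
                = ∑ t ∈ Finset.range i, (if t < ts then i - 1 - ts + t else t - ts - 1) :=
                  claim2.symm
              _ ≤ ∑ t ∈ Finset.range i, rho p (a + t) := Finset.sum_le_sum claim1
          rw [hC]
          have hmin : min (i-1) (sFix p m1) ≤ sFix p m1 := Nat.min_le_right _ _
          omega

/-- Upper bound: some window sum attains `Esum`. -/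
theorem exists_Wsum (p : ℕ) (hp : 3 ≤ p) : ∀ m, ∃ n, Wsum p n m = Esum p m := by
  have hp2 : 2 ≤ p := by omega
  have hple : 0 < p := by omega
  intro m
  induction m using Nat.strong_induction_on with
  | _ m ih =>
    rcases Nat.lt_or_ge m 2 with hm2 | hm2
    · interval_cases m
      · exact ⟨0, by simp [Wsum, Esum]⟩
      · refine ⟨0, ?_⟩
        have h1 : Wsum p 0 1 = 0 := by
          simp [Wsum]
          rw [natphi_eq_of_ne p 0 hp2 (by simp; omega)]
          simp
        have h2 : Esum p 1 = 0 := by simp [Esum, sFix_zero]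
        rw [h1, h2]
    · obtain ⟨m1, i, hilt, hmm⟩ : ∃ m1 i, i < p ∧ p * m1 + i = m :=
        ⟨m / p, m % p, Nat.mod_lt _ hple, Nat.div_add_mod m p⟩
      have hp3m : 3 * m1 ≤ p * m1 := Nat.mul_le_mul_right m1 hp
      have hE : Esum p (p * m1 + i) = m1 * Tp p + Esum p m1 + Csum (sFix p m1) i :=
        Esum_block p hp2 m1 i (by omega)
      have hsle : sFix p m1 ≤ p - 2 := sFix_le p m1 hp2
      rcases Nat.eq_zero_or_pos i with hi0 | hi0
      · -- aligned case
        obtain ⟨n1, hn1⟩ := ih m1 (by omega)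
        refine ⟨p * n1 + 0, ?_⟩
        rw [← hmm]
        rw [Wsum_dec' p hp2 n1 0 m1 i (by omega) hilt, hE]
        subst hi0
        simp only [Csum, Finset.range_zero, Finset.sum_empty, add_zero, Nat.zero_div,
          Nat.zero_add]
        omega
      · have hC : Csum (sFix p m1) i
            = (∑ j ∈ Finset.range (i-1), j) + min (i-1) (sFix p m1) := by
          have h := Csum_eq (sFix p m1) (i - 1)
          rw [show i - 1 + 1 = i by omega] at h
          exact h
        rcases Nat.lt_or_ge (sFix p m1) (i - 1) with hcase | hcase
        · -- s < i - 1 : start at residue p - 1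
          obtain ⟨n1, hn1⟩ := ih (m1 + 1) (by omega)
          refine ⟨p * n1 + (p - 1), ?_⟩
          rw [← hmm]
          rw [Wsum_dec' p hp2 n1 (p-1) m1 i (by omega) hilt, hE]
          have hdiv1 : (p - 1 + i) / p = 1 := by
            have h2 : (p - 1 + i) / p < 2 := (Nat.div_lt_iff_lt_mul hple).mpr (by omega)
            have h3 : 1 ≤ (p - 1 + i) / p := (Nat.le_div_iff_mul_le hple).mpr (by omega)
            omega
          rw [hdiv1, hn1, Esum_succ p m1]
          have hrho : ∑ t ∈ Finset.range i, rho p (p - 1 + t)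
              = ∑ j ∈ Finset.range (i-1), j := by
            have h1 : ∀ t ∈ Finset.range i, rho p (p - 1 + t) = t - 1 := by
              intro t ht
              simp only [Finset.mem_range] at ht
              rcases Nat.eq_zero_or_pos t with ht0 | ht0
              · subst ht0
                rw [rho_top p hp2 (p - 1 + 0) (p - 1)
                  (by rw [add_zero]; exact Nat.mod_eq_of_lt (by omega)) rfl]
              · rw [rho_wrap p hp2 (p-1) t (p-1) (Nat.mod_eq_of_lt (by omega))
                  (by omega) (by omega) (by omega)]
                omega
            rw [Finset.sum_congr rfl h1, sum_shift]
          rw [hrho, hC]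
          have hmin : min (i-1) (sFix p m1) = sFix p m1 := by omega
          omega
        · -- i - 1 ≤ s : start aligned
          obtain ⟨n1, hn1⟩ := ih m1 (by omega)
          refine ⟨p * n1 + 0, ?_⟩
          rw [← hmm]
          rw [Wsum_dec' p hp2 n1 0 m1 i (by omega) hilt, hE]
          have hdiv0 : (0 + i) / p = 0 := by
            rw [Nat.zero_add]; exact Nat.div_eq_of_lt hilt
          rw [hdiv0, Nat.add_zero, hn1]
          have hrho : ∑ t ∈ Finset.range i, rho p (0 + t)
              = (∑ j ∈ Finset.range (i-1), j) + (i - 1) := by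
            have h1 : ∀ t ∈ Finset.range i, rho p (0 + t) = t := by
              intro t ht
              simp only [Finset.mem_range] at ht
              rw [rho_lt p hp2 0 t 0 (Nat.zero_mod p) (by omega)]
              omega
            rw [Finset.sum_congr rfl h1]
            have h := Finset.sum_range_succ (fun t => t) (i - 1)
            rw [show i - 1 + 1 = i by omega] at h
            exact h
          rw [hrho, hC]
          have hmin : min (i-1) (sFix p m1) = i - 1 := by omega
          omega

/-- The infimum of all window sums is exactly `Esum`. -/
theorem sInf_Wsum (p : ℕ) (hp : 3 ≤ p) (m : ℕ) :
    sInf (Set.range fun n => Wsum p n m) = Esum p m := by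
  obtain ⟨n0, hn0⟩ := exists_Wsum p hp m
  apply le_antisymm
  · exact Nat.sInf_le ⟨n0, hn0⟩
  · apply le_csInf (Set.range_nonempty _)
    rintro b ⟨n, rfl⟩
    exact Esum_le_Wsum p hp m n

/-! ### base-`p` digit arithmetic -/

theorem mod_pow_succ' (p t k : ℕ) (hp : 0 < p) :
    k % p ^ (t+1) = k % p ^ t + p ^ t * (k / p ^ t % p) := by
  have hpt : 0 < p ^ t := Nat.pow_pos (n := t) hp
  have h1 : k = p ^ t * (k / p ^ t) + k % p ^ t := (Nat.div_add_mod _ _).symm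
  have h2 : k / p ^ t = p * (k / p ^ (t+1)) + k / p ^ t % p := by
    conv_lhs => rw [← Nat.div_add_mod (k / p ^ t) p]
    rw [Nat.div_div_eq_div_mul, ← pow_succ]
  have h3 : k = p ^ (t+1) * (k / p ^ (t+1)) + (k % p ^ t + p ^ t * (k / p ^ t % p)) := by
    calc k = p ^ t * (k / p ^ t) + k % p ^ t := h1
      _ = p ^ t * (p * (k / p ^ (t+1)) + k / p ^ t % p) + k % p ^ t := by rw [← h2]
      _ = p ^ (t+1) * (k / p ^ (t+1)) + (k % p ^ t + p ^ t * (k / p ^ t % p)) := by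
          rw [pow_succ]; ring
  have h4 : k % p ^ t + p ^ t * (k / p ^ t % p) < p ^ (t+1) := by
    have ha : k % p ^ t < p ^ t := Nat.mod_lt _ hpt
    have hb : k / p ^ t % p ≤ p - 1 := by have := Nat.mod_lt (k / p ^ t) hp; omega
    have hc : p ^ t * (k / p ^ t % p) ≤ p ^ t * (p - 1) := Nat.mul_le_mul_left _ hb
    have hd : p ^ t * (p - 1) + p ^ t = p ^ (t + 1) := by
      rw [pow_succ, Nat.mul_sub_one]
      have := Nat.one_le_two_pow (n := t)
      have hle : p ^ t ≤ p ^ t * p := Nat.le_mul_of_pos_right _ hp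
      omega
    omega
  conv_lhs => rw [h3]
  rw [add_comm, Nat.add_mul_mod_self_left]
  exact Nat.mod_eq_of_lt h4

theorem digits_all_top (p t k : ℕ) (hp : 2 ≤ p)
    (h : ∀ i < t, k / p ^ i % p = p - 1) : k % p ^ t = p ^ t - 1 := by
  induction t with
  | zero => simp [Nat.mod_one]
  | succ t ih =>
    have h1 : k % p ^ t = p ^ t - 1 := ih (fun i hi => h i (by omega))
    rw [mod_pow_succ' p t k (by omega), h1, h t (by omega)]
    have hpt : 0 < p ^ t := Nat.pow_pos (n := t) (by omega)
    rw [pow_succ, Nat.mul_sub_one]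
    have : p ^ t * (p - 1) + p ^ t = p ^ t * p := by
      rw [Nat.mul_sub_one]
      have hle : p ^ t ≤ p ^ t * p := Nat.le_mul_of_pos_right _ (by omega)
      omega
    omega

theorem exists_digit_ne (p t k : ℕ) (hp : 2 ≤ p) (hk : k + 2 ≤ p ^ (t+1)) :
    ∃ i ≤ t, k / p ^ i % p ≠ p - 1 := by
  by_contra h
  push_neg at h
  have h1 : k % p ^ (t+1) = p ^ (t+1) - 1 :=
    digits_all_top p (t+1) k hp (fun i hi => h i (by omega))
  have h2 : k % p ^ (t+1) = k := Nat.mod_eq_of_lt (by omega)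
  omega

/-- adding one: the carry propagates through the initial run of digits `p-1`. -/
theorem digit_succ (p k i0 : ℕ) (hp : 2 ≤ p)
    (hrun : ∀ i < i0, k / p ^ i % p = p - 1) (hd : k / p ^ i0 % p ≠ p - 1) :
    (∀ i < i0, (k+1) / p ^ i % p = 0) ∧
    ((k+1) / p ^ i0 % p = k / p ^ i0 % p + 1) ∧
    (∀ i, i0 < i → (k+1) / p ^ i % p = k / p ^ i % p) := by
  have hple : 0 < p := by omega
  set q := k / p ^ i0 with hq
  have hdlt : q % p < p - 1 := by
    have := Nat.mod_lt q hple; omega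
  have hmod : k % p ^ i0 = p ^ i0 - 1 := digits_all_top p i0 k hp hrun
  have hpt : 0 < p ^ i0 := Nat.pow_pos (n := i0) hple
  have hk1 : k + 1 = p ^ i0 * (q + 1) := by
    have : k = p ^ i0 * q + (p ^ i0 - 1) := by
      conv_lhs => rw [← Nat.div_add_mod k (p ^ i0)]
      rw [hmod]
    rw [this, Nat.mul_add, Nat.mul_one]
    omega
  refine ⟨?_, ?_, ?_⟩
  · intro i hi
    have hdvd : p ^ i0 = p ^ i * p ^ (i0 - i) := by
      rw [← pow_add]; congr 1; omega
    have : (k+1) / p ^ i = p ^ (i0 - i) * (q + 1) := by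
      rw [hk1, hdvd, Nat.mul_assoc, Nat.mul_div_cancel_left _ (Nat.pow_pos (n := i) hple)]
    rw [this]
    have h10 : 1 ≤ i0 - i := by omega
    have : p ^ (i0 - i) * (q+1) = p * (p ^ (i0 - i - 1) * (q+1)) := by
      rw [← Nat.mul_assoc, ← pow_succ']
      congr 2
      omega
    rw [this, Nat.mul_mod_right]
  · have h1 : (k+1) / p ^ i0 = q + 1 := by
      rw [hk1, Nat.mul_div_cancel_left _ hpt]
    rw [h1]
    have hdm := Nat.div_add_mod q p
    have h2 : q + 1 = (q % p + 1) + p * (q / p) := by omega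
    rw [h2, Nat.add_mul_mod_self_left, Nat.mod_eq_of_lt (by omega)]
  · intro i hi
    obtain ⟨s, rfl⟩ : ∃ s, i = i0 + s := ⟨i - i0, by omega⟩
    have hs1 : 1 ≤ s := by omega
    have hps : 0 < p ^ s := Nat.pow_pos (n := s) hple
    have hdd : ∀ j : ℕ, j / p ^ (i0 + s) = j / p ^ i0 / p ^ s := by
      intro j; rw [Nat.div_div_eq_div_mul, ← pow_add]
    have hpls : p ≤ p ^ s := by
      calc p = p ^ 1 := (pow_one p).symm
      _ ≤ p ^ s := Nat.pow_le_pow_right hple hs1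
    have hqs : q % p ^ s ≤ p ^ s - 2 := by
      have h1 : q % p ^ s < p ^ s := Nat.mod_lt _ hps
      have h2 : q % p ^ s % p = q % p := Nat.mod_mod_of_dvd q (dvd_pow_self p (by omega))
      by_contra hcon
      have heq : q % p ^ s = p ^ s - 1 := by omega
      rw [heq] at h2
      have h3 : (p ^ s - 1) % p = p - 1 := by
        have hpp : p * p ^ (s-1) = p ^ s := by
          rw [← pow_succ']; congr 1; omega
        have hp1 : 1 ≤ p ^ (s-1) := Nat.pow_pos hple
        have hms : p * (p ^ (s-1) - 1) = p ^ s - p := by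
          rw [Nat.mul_sub, hpp, Nat.mul_one]
        have hsplit : p ^ s - 1 = (p - 1) + p * (p ^ (s-1) - 1) := by omega
        rw [hsplit, Nat.add_mul_mod_self_left, Nat.mod_eq_of_lt (by omega)]
      omega
    have hq1 : (q + 1) / p ^ s = q / p ^ s := by
      have hdm := Nat.div_add_mod q (p ^ s)
      have h2 : q + 1 = (q % p ^ s + 1) + p ^ s * (q / p ^ s) := by omega
      rw [h2, Nat.add_mul_div_left _ _ hps, Nat.div_eq_of_lt (by omega), Nat.zero_add]
    rw [hdd, hdd, hk1, Nat.mul_div_cancel_left _ hpt, hq1, ← hq]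

/-- `natphi` reads off the first digit `≠ p-1`. -/
theorem natphi_digit (p : ℕ) (hp : 2 ≤ p) :
    ∀ i0 k, (∀ i < i0, k / p ^ i % p = p - 1) → k / p ^ i0 % p ≠ p - 1 →
      natphi p k = k / p ^ i0 % p := by
  intro i0
  induction i0 with
  | zero =>
    intro k _ hd
    simp only [pow_zero, Nat.div_one] at hd ⊢
    exact natphi_eq_of_ne p k hp hd
  | succ j ih =>
    intro k hrun hd
    have h0 : k % p = p - 1 := by
      have := hrun 0 (by omega); simpa using this
    rw [natphi_eq_of_eq p k hp h0]
    have hsh : ∀ i : ℕ, k / p / p ^ i = k / p ^ (i+1) := by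
      intro i
      rw [Nat.div_div_eq_div_mul, ← pow_succ']
    rw [ih (k / p) (fun i hi => by rw [hsh i]; exact hrun (i+1) (by omega))
      (by rw [hsh j]; exact hd), hsh j]

/-! ### the odometer bridge -/


theorem firstNot_facts (p : ℕ) (hp : 2 ≤ p) (x : ℕ → ℕ) (t k : ℕ)
    (h1 : ∀ i ≤ t, x i = k / p ^ i % p) (hk : k + 2 ≤ p ^ (t+1)) :
    firstNot p x ≤ t ∧
    (∀ i < firstNot p x, k / p ^ i % p = p - 1) ∧
    k / p ^ (firstNot p x) % p ≠ p - 1 := by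
  obtain ⟨i, hi, hne⟩ := exists_digit_ne p t k hp hk
  have hmem : i ∈ {i | x i ≠ p - 1} := by
    simp only [Set.mem_setOf_eq, h1 i hi]
    exact hne
  have hle : firstNot p x ≤ i := Nat.sInf_le hmem
  have hfle : firstNot p x ≤ t := le_trans hle hi
  have hmm : firstNot p x ∈ {i | x i ≠ p - 1} := Nat.sInf_mem ⟨i, hmem⟩
  refine ⟨hfle, ?_, ?_⟩
  · intro i' hi'
    have : i' ∉ {i | x i ≠ p - 1} := Nat.notMem_of_lt_sInf hi'
    simp only [Set.mem_setOf_eq, not_not] at this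
    rw [← h1 i' (by omega)]
    exact this
  · rw [← h1 _ hfle]
    exact hmm

theorem iter_odo (p : ℕ) (hp : 2 ≤ p) (x : ℕ → ℕ) (t n : ℕ)
    (hx : ∀ i ≤ t, x i = n / p ^ i % p) :
    ∀ j, n + j + 2 ≤ p ^ (t+1) →
      (∀ i ≤ t, ((odo p)^[j] x) i = (n + j) / p ^ i % p) ∧
      (∀ i, t < i → ((odo p)^[j] x) i = x i) := by
  intro j
  induction j with
  | zero =>
    intro _
    refine ⟨?_, fun _ _ => rfl⟩
    simpa using hx
  | succ j ih =>
    intro hj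
    obtain ⟨h1, h2⟩ := ih (by omega)
    set y := (odo p)^[j] x with hy
    set k := n + j with hk
    obtain ⟨hfle, hrun, hd⟩ := firstNot_facts p hp y t k h1 (by omega)
    obtain ⟨c1, c2, c3⟩ := digit_succ p k (firstNot p y) hp hrun hd
    have hstep : (odo p)^[j+1] x = odo p y := by
      rw [Function.iterate_succ_apply']
    rw [hstep]
    have hnj : n + (j + 1) = k + 1 := by omega
    rw [hnj]
    constructor
    · intro i hi
      unfold odo
      rcases Nat.lt_trichotomy i (firstNot p y) with hlt | heq | hgt
      · rw [if_pos hlt]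
        exact (c1 i hlt).symm
      · rw [if_neg (by omega), if_pos heq, heq, c2, h1 _ hfle]
      · rw [if_neg (by omega), if_neg (by omega), h1 i hi, c3 i hgt]
    · intro i hi
      unfold odo
      rw [if_neg (by omega), if_neg (by omega)]
      exact h2 i hi

theorem phiSum_eq_Wsum (p : ℕ) (hp : 2 ≤ p) (x : ℕ → ℕ) (t n m : ℕ)
    (hx : ∀ i ≤ t, x i = n / p ^ i % p) (hm : n + m + 1 ≤ p ^ (t+1)) :
    phiSum p m x = Wsum p n m := by
  unfold phiSum Wsum
  apply Finset.sum_congr rfl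
  intro j hj
  simp only [Finset.mem_range] at hj
  obtain ⟨h1, _⟩ := iter_odo p hp x t n hx j (by omega)
  set y := (odo p)^[j] x with hy
  obtain ⟨hfle, hrun, hd⟩ := firstNot_facts p hp y t (n + j) h1 (by omega)
  unfold phi
  rw [h1 _ hfle, (natphi_digit p hp (firstNot p y) (n+j) hrun hd).symm]

/-! ### real digits -/


theorem floor_div_nat (N q : ℕ) (hq : 0 < q) (v : ℝ)
    (h1 : (N : ℝ) / q ≤ v) (h2 : v < ((N : ℝ) + 1) / q) :
    ⌊v⌋ = ((N / q : ℕ) : ℤ) := by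
  have hq' : (0:ℝ) < q := by exact_mod_cast hq
  rw [Int.floor_eq_iff]
  constructor
  · push_cast
    refine le_trans ?_ h1
    rw [le_div_iff₀ hq']
    exact_mod_cast Nat.div_mul_le_self N q
  · push_cast
    refine lt_of_lt_of_le h2 ?_
    rw [div_le_iff₀ hq']
    have hnat : N + 1 ≤ N / q * q + q := by
      have h := Nat.div_add_mod N q
      have h2' : q * (N / q) = N / q * q := Nat.mul_comm _ _
      have h3 : N % q < q := Nat.mod_lt _ hq
      omega
    calc (N : ℝ) + 1 ≤ ((N / q * q + q : ℕ) : ℝ) := by exact_mod_cast hnat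
      _ = (((N / q : ℕ) : ℝ) + 1) * q := by push_cast; ring

theorem digitsOf_interval (p K N : ℕ) (hp : 2 ≤ p) (i : ℕ) (hiK : i < K) (u : ℝ)
    (h1 : (N : ℝ) / p ^ K ≤ u) (h2 : u < ((N : ℝ) + 1) / p ^ K) :
    digitsOf p u i = N / p ^ (K - 1 - i) % p := by
  have hp0 : (0:ℝ) < (p:ℝ) := by
    have : 0 < p := by omega
    exact_mod_cast this
  have hpow : (0:ℝ) < (p:ℝ) ^ (i+1) := by positivity
  have hq : 0 < p ^ (K - 1 - i) := Nat.pow_pos (by omega)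
  have hqR : (0:ℝ) < ((p ^ (K-1-i) : ℕ) : ℝ) := by exact_mod_cast hq
  have hkey : ((p ^ (K-1-i) : ℕ) : ℝ) * (p:ℝ) ^ (i+1) = (p:ℝ) ^ K := by
    push_cast
    rw [← pow_add]
    congr 1
    omega
  have e1 : ((N:ℝ) / (p ^ (K-1-i) : ℕ)) ≤ u * (p:ℝ) ^ (i+1) := by
    rw [div_le_iff₀ hqR]
    calc (N:ℝ) = (N:ℝ) / (p:ℝ)^K * (p:ℝ)^K := by field_simp
      _ ≤ u * (p:ℝ)^K := by
          apply mul_le_mul_of_nonneg_right h1 (by positivity)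
      _ = u * (p:ℝ)^(i+1) * ((p ^ (K-1-i) : ℕ) : ℝ) := by rw [← hkey]; ring
  have e2 : u * (p:ℝ) ^ (i+1) < ((N:ℝ) + 1) / (p ^ (K-1-i) : ℕ) := by
    rw [lt_div_iff₀ hqR]
    calc u * (p:ℝ)^(i+1) * ((p ^ (K-1-i) : ℕ) : ℝ) = u * (p:ℝ)^K := by rw [← hkey]; ring
      _ < ((N:ℝ)+1) / (p:ℝ)^K * (p:ℝ)^K := by
          apply mul_lt_mul_of_pos_right h2 (by positivity)
      _ = (N:ℝ) + 1 := by field_simp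
  have hfl := floor_div_nat N (p ^ (K-1-i)) hq (u * (p:ℝ)^(i+1)) e1 e2
  unfold digitsOf
  rw [hfl, Int.toNat_natCast]

def revDig (p : ℕ) : ℕ → ℕ → ℕ
  | 0, _ => 0
  | K+1, n => (n % p) * p ^ K + revDig p K (n / p)

theorem revDig_lt (p : ℕ) (hp : 2 ≤ p) : ∀ K n, revDig p K n < p ^ K := by
  intro K
  induction K with
  | zero => intro n; simp [revDig]
  | succ K ih =>
    intro n
    have h1 : revDig p K (n / p) < p ^ K := ih (n / p)
    have h2 : n % p ≤ p - 1 := by have := Nat.mod_lt n (show 0 < p by omega); omega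
    have h3 : n % p * p ^ K ≤ (p - 1) * p ^ K := Nat.mul_le_mul_right _ h2
    have h4 : (p - 1) * p ^ K + p ^ K = p ^ (K+1) := by
      have hps : p - 1 + 1 = p := by omega
      calc (p-1) * p^K + p^K = ((p-1) + 1) * p^K := by rw [add_mul, one_mul]
        _ = p * p^K := by rw [hps]
        _ = p ^ (K+1) := (pow_succ' p K).symm
    simp only [revDig]
    omega

theorem revDig_digit (p : ℕ) (hp : 2 ≤ p) :
    ∀ K n i, i < K → revDig p K n / p ^ (K - 1 - i) % p = n / p ^ i % p := by
  intro K
  induction K with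
  | zero => intro n i hi; omega
  | succ K ih =>
    intro n i hi
    rcases Nat.eq_zero_or_pos i with hi0 | hi0
    · subst hi0
      simp only [revDig, Nat.add_sub_cancel, Nat.sub_zero, pow_zero, Nat.div_one]
      have h1 : revDig p K (n / p) < p ^ K := revDig_lt p hp K (n / p)
      rw [show n % p * p ^ K + revDig p K (n / p)
          = revDig p K (n / p) + p ^ K * (n % p) by ring,
        Nat.add_mul_div_left _ _ (Nat.pow_pos (by omega)),
        Nat.div_eq_of_lt h1, Nat.zero_add]
      exact Nat.mod_mod_of_dvd n (dvd_refl p)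
    · obtain ⟨i', rfl⟩ : ∃ i', i = i' + 1 := ⟨i - 1, by omega⟩
      have hii : i' < K := by omega
      have hE : K + 1 - 1 - (i' + 1) = K - 1 - i' := by omega
      simp only [revDig, hE]
      have hsplit : p ^ K = p ^ (K - 1 - i') * p ^ (i' + 1) := by
        rw [← pow_add]; congr 1; omega
      rw [show n % p * p ^ K + revDig p K (n / p)
          = revDig p K (n / p) + p ^ (K - 1 - i') * (n % p * p ^ (i' + 1)) by
            rw [hsplit]; ring,
        Nat.add_mul_div_left _ _ (Nat.pow_pos (by omega))]
      rw [show n % p * p ^ (i' + 1) = n % p * p ^ i' * p by rw [pow_succ]; ring,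
        Nat.add_mul_mod_self_right]
      rw [ih (n / p) i' hii]
      rw [Nat.div_div_eq_div_mul, ← pow_succ']

def valx (p : ℕ) (x : ℕ → ℕ) : ℕ → ℕ
  | 0 => 0
  | K+1 => valx p x K + x K * p ^ K

theorem valx_lt (p : ℕ) (hp : 2 ≤ p) (x : ℕ → ℕ) :
    ∀ K, (∀ i, i < K → x i < p) → valx p x K < p ^ K := by
  intro K
  induction K with
  | zero => intro _; simp [valx]
  | succ K ih =>
    intro hx
    have h1 : valx p x K < p ^ K := ih (fun i hi => hx i (by omega))
    have h2 : x K ≤ p - 1 := by have := hx K (by omega); omega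
    have h3 : x K * p ^ K ≤ (p - 1) * p ^ K := Nat.mul_le_mul_right _ h2
    have h4 : (p - 1) * p ^ K + p ^ K = p ^ (K+1) := by
      have hps : p - 1 + 1 = p := by omega
      calc (p-1) * p^K + p^K = ((p-1) + 1) * p^K := by rw [add_mul, one_mul]
        _ = p * p^K := by rw [hps]
        _ = p ^ (K+1) := (pow_succ' p K).symm
    simp only [valx]
    omega

theorem valx_digit (p : ℕ) (hp : 2 ≤ p) (x : ℕ → ℕ) :
    ∀ K, (∀ i, i < K → x i < p) → ∀ i, i < K → valx p x K / p ^ i % p = x i := by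
  intro K
  induction K with
  | zero => intro _ i hi; omega
  | succ K ih =>
    intro hx i hi
    have hvK : valx p x K < p ^ K := valx_lt p hp x K (fun i hi => hx i (by omega))
    rcases Nat.lt_or_ge i K with hiK | hiK
    · have hsplit : p ^ K = p ^ i * p ^ (K - i) := by
        rw [← pow_add]; congr 1; omega
      simp only [valx]
      rw [show valx p x K + x K * p ^ K
          = valx p x K + p ^ i * (x K * p ^ (K - i)) by rw [hsplit]; ring,
        Nat.add_mul_div_left _ _ (Nat.pow_pos (by omega))]
      rw [show x K * p ^ (K - i) = x K * p ^ (K - i - 1) * p by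
          rw [Nat.mul_assoc, ← pow_succ]
          congr 2
          omega,
        Nat.add_mul_mod_self_right]
      exact ih (fun i hi => hx i (by omega)) i hiK
    · have hieq : i = K := by omega
      subst hieq
      simp only [valx]
      rw [show valx p x i + x i * p ^ i = valx p x i + p ^ i * x i by ring,
        Nat.add_mul_div_left _ _ (Nat.pow_pos (by omega)),
        Nat.div_eq_of_lt hvK, Nat.zero_add,
        Nat.mod_eq_of_lt (hx i (by omega))]

/-- a real in `[0,1)` never has all base-`p` digits equal to `p-1` from some point on. -/
theorem exists_digit_lt (p : ℕ) (hp : 2 ≤ p) (u : ℝ) (hu0 : 0 ≤ u) (t0 : ℕ) :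
    ∃ t, t0 ≤ t ∧ digitsOf p u t ≠ p - 1 := by
  have hp0 : (1:ℝ) < (p:ℝ) := by exact_mod_cast hp
  by_contra hcon
  push_neg at hcon
  have step : ∀ t, t0 ≤ t →
      1 - Int.fract (u * (p:ℝ) ^ (t+1)) = p * (1 - Int.fract (u * (p:ℝ) ^ t)) := by
    intro t ht
    have hd := hcon t ht
    set x := u * (p:ℝ) ^ t with hxd
    have hx0 : 0 ≤ x := by positivity
    have hfl0 : 0 ≤ ⌊x⌋ := Int.floor_nonneg.mpr hx0
    have hf0 : 0 ≤ Int.fract x := Int.fract_nonneg x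
    have hf1 : Int.fract x < 1 := Int.fract_lt_one x
    have hxp : u * (p:ℝ) ^ (t+1) = (↑⌊x⌋ * (p:ℝ)) + Int.fract x * p := by
      have : ((⌊x⌋:ℝ) + Int.fract x) = x := by
        rw [Int.floor_add_fract]
      calc u * (p:ℝ)^(t+1) = x * p := by rw [hxd, pow_succ]; ring
        _ = ((⌊x⌋:ℝ) + Int.fract x) * p := by rw [this]
        _ = (↑⌊x⌋ * (p:ℝ)) + Int.fract x * p := by ring
    have hfloor : ⌊u * (p:ℝ) ^ (t+1)⌋ = ⌊x⌋ * p + ⌊Int.fract x * p⌋ := by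
      rw [hxp, show (↑⌊x⌋ * (p:ℝ)) = ((⌊x⌋ * (p:ℕ) : ℤ) : ℝ) by push_cast; ring,
        Int.floor_intCast_add]
    have he0 : 0 ≤ ⌊Int.fract x * p⌋ := Int.floor_nonneg.mpr (by positivity)
    have he1 : ⌊Int.fract x * p⌋ < p := by
      have : Int.fract x * p < p := by nlinarith
      have h2 : (⌊Int.fract x * p⌋ : ℝ) ≤ Int.fract x * p := Int.floor_le _
      exact_mod_cast lt_of_le_of_lt h2 this
    -- compute the digit
    obtain ⟨mm, hmm'⟩ : ∃ mm : ℕ, ⌊x⌋ = (mm : ℤ) := ⟨⌊x⌋.toNat, (Int.toNat_of_nonneg hfl0).symm⟩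
    obtain ⟨ee, hee'⟩ : ∃ ee : ℕ, ⌊Int.fract x * p⌋ = (ee : ℤ) :=
      ⟨_, (Int.toNat_of_nonneg he0).symm⟩
    have heelt : ee < p := by exact_mod_cast hee' ▸ he1
    have hdig : digitsOf p u t = ee := by
      unfold digitsOf
      rw [hfloor, hmm', hee', show ((mm:ℤ) * p + (ee:ℤ)) = ((p * mm + ee : ℕ) : ℤ) by
        push_cast; ring, Int.toNat_natCast, Nat.mul_add_mod, Nat.mod_eq_of_lt heelt]
    have hee : ee = p - 1 := by rw [← hdig]; exact hd
    -- fract relation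
    have hfr : Int.fract (u * (p:ℝ) ^ (t+1)) = Int.fract x * p - ((p:ℝ) - 1) := by
      rw [hxp, show (↑⌊x⌋ * (p:ℝ)) = ((⌊x⌋ * (p:ℕ) : ℤ) : ℝ) by push_cast; ring,
        Int.fract_intCast_add, Int.fract]
      rw [hee', hee]
      push_cast [show (1:ℕ) ≤ p by omega]
      ring
    rw [hfr]
    ring
  have key : ∀ s : ℕ,
      1 - Int.fract (u * (p:ℝ) ^ (t0 + s)) = (p:ℝ) ^ s * (1 - Int.fract (u * (p:ℝ) ^ t0)) := by
    intro s
    induction s with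
    | zero => simp
    | succ s ih =>
      rw [show t0 + (s+1) = (t0 + s) + 1 by omega, step (t0 + s) (by omega), ih, pow_succ]
      ring
  set ε := 1 - Int.fract (u * (p:ℝ) ^ t0) with hε
  have hε0 : 0 < ε := by
    have := Int.fract_lt_one (u * (p:ℝ) ^ t0)
    rw [hε]; linarith
  obtain ⟨s, hs⟩ := pow_unbounded_of_one_lt (1/ε) hp0
  have h1 : 1 - Int.fract (u * (p:ℝ) ^ (t0 + s)) ≤ 1 := by
    have := Int.fract_nonneg (u * (p:ℝ) ^ (t0 + s))
    linarith
  rw [key s] at h1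
  have h2 : (1:ℝ) < (p:ℝ) ^ s * ε := by
    rw [div_lt_iff₀ hε0] at hs
    linarith
  linarith

/-! ### measurability -/

open MeasureTheory

theorem measurable_digitsOf (p : ℕ) : Measurable (digitsOf p) := by
  apply measurable_pi_lambda
  intro i
  have h1 : Measurable fun u : ℝ => u * (p:ℝ) ^ (i+1) := measurable_id.mul_const _
  have h2 : Measurable fun u : ℝ => ⌊u * (p:ℝ) ^ (i+1)⌋ := Int.measurable_floor.comp h1
  exact (measurable_from_top (f := fun z : ℤ => z.toNat % p)).comp h2

theorem measurableSet_coord (i v : ℕ) : MeasurableSet {x : ℕ → ℕ | x i = v} := by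
  show MeasurableSet ((fun x : ℕ → ℕ => x i) ⁻¹' {v})
  exact measurable_pi_apply i (measurableSet_singleton v)

theorem measurableSet_firstNot (p n : ℕ) :
    MeasurableSet {x : ℕ → ℕ | firstNot p x = n} := by
  rcases Nat.eq_zero_or_pos n with h0 | h0
  · subst h0
    have heq : {x : ℕ → ℕ | firstNot p x = 0}
        = {x : ℕ → ℕ | x 0 ≠ p - 1} ∪ ⋂ i, {x : ℕ → ℕ | x i = p - 1} := by
      ext x
      simp only [Set.mem_setOf_eq, Set.mem_union, Set.mem_iInter]
      unfold firstNot
      rw [Nat.sInf_eq_zero]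
      constructor
      · rintro (h | h)
        · exact Or.inl h
        · right
          intro i
          by_contra hne
          rw [Set.eq_empty_iff_forall_notMem] at h
          exact h i hne
      · rintro (h | h)
        · exact Or.inl h
        · right
          rw [Set.eq_empty_iff_forall_notMem]
          intro i hi
          exact hi (h i)
    rw [heq]
    apply MeasurableSet.union
    · exact (measurableSet_coord 0 (p-1)).compl
    · exact MeasurableSet.iInter (fun i => measurableSet_coord i (p-1))
  · have heq : {x : ℕ → ℕ | firstNot p x = n}
        = (⋂ i ∈ Set.Iio n, {x : ℕ → ℕ | x i = p - 1}) ∩ {x : ℕ → ℕ | x n ≠ p - 1} := by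
      ext x
      simp only [Set.mem_setOf_eq, Set.mem_inter_iff, Set.mem_iInter, Set.mem_Iio]
      unfold firstNot
      constructor
      · intro h
        have hne : {i | x i ≠ p - 1}.Nonempty := by
          by_contra hc
          rw [Set.not_nonempty_iff_eq_empty] at hc
          rw [hc] at h
          simp [Nat.sInf_empty] at h
          omega
        constructor
        · intro i hi
          have := Nat.notMem_of_lt_sInf (show i < sInf {i | x i ≠ p - 1} by rw [h]; exact hi)
          simp only [Set.mem_setOf_eq, not_not] at this
          exact this
        · have := Nat.sInf_mem hne
          rw [h] at this
          exact this
      · rintro ⟨h1, h2⟩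
        have hmem : n ∈ {i | x i ≠ p - 1} := h2
        apply le_antisymm
        · exact Nat.sInf_le hmem
        · by_contra hc
          push_neg at hc
          have := Nat.sInf_mem (⟨n, hmem⟩ : {i | x i ≠ p - 1}.Nonempty)
          have hlt : sInf {i | x i ≠ p - 1} < n := hc
          exact this (h1 _ hlt)
    rw [heq]
    apply MeasurableSet.inter
    · exact MeasurableSet.biInter (Set.to_countable _)
        (fun i _ => measurableSet_coord i (p-1))
    · exact (measurableSet_coord n (p-1)).compl

theorem measurable_phi (p : ℕ) : Measurable (phi p) := by
  apply measurable_to_countable'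
  intro v
  have heq : phi p ⁻¹' {v}
      = ⋃ n, ({x : ℕ → ℕ | firstNot p x = n} ∩ {x : ℕ → ℕ | x n = v}) := by
    ext x
    simp only [Set.mem_preimage, Set.mem_singleton_iff, Set.mem_iUnion, Set.mem_inter_iff,
      Set.mem_setOf_eq]
    constructor
    · intro h
      exact ⟨firstNot p x, rfl, h⟩
    · rintro ⟨n, h1, h2⟩
      unfold phi
      rw [h1]
      exact h2
  rw [heq]
  exact MeasurableSet.iUnion
    (fun n => (measurableSet_firstNot p n).inter (measurableSet_coord n v))

theorem measurable_odo (p : ℕ) : Measurable (odo p) := by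
  apply measurable_pi_lambda
  intro i
  apply measurable_to_countable'
  intro v
  have heq : (fun x => odo p x i) ⁻¹' {v}
      = ⋃ n, ({x : ℕ → ℕ | firstNot p x = n}
          ∩ ((fun x : ℕ → ℕ => x i) ⁻¹'
              {w : ℕ | (if i < n then 0 else if i = n then w + 1 else w) = v})) := by
    ext x
    simp only [Set.mem_preimage, Set.mem_singleton_iff, Set.mem_iUnion, Set.mem_inter_iff,
      Set.mem_setOf_eq]
    constructor
    · intro h
      refine ⟨firstNot p x, rfl, ?_⟩
      rw [← h]
      unfold odo
      rfl
    · rintro ⟨n, h1, h2⟩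
      unfold odo
      rw [h1]
      exact h2
  rw [heq]
  exact MeasurableSet.iUnion (fun n => (measurableSet_firstNot p n).inter
    ((measurable_pi_apply i) (measurableSet_singleton v |>.preimage measurable_from_top)))

theorem measurable_phiSum (p m : ℕ) : Measurable (phiSum p m) := by
  unfold phiSum
  apply Finset.measurable_sum
  intro j _
  exact (measurable_phi p).comp ((measurable_odo p).iterate j)

/-! ### the measure and the final identification -/


theorem pim_eq (p m j : ℕ) :
    pim p m j
      = volume ((fun u => phiSum p m (digitsOf p u)) ⁻¹' {j} ∩ Set.Ico (0:ℝ) 1) := by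
  unfold pim lam
  have hS : MeasurableSet {x : ℕ → ℕ | phiSum p m x = j} :=
    measurable_phiSum p m (measurableSet_singleton j)
  rw [Measure.map_apply (measurable_digitsOf p) hS,
    Measure.restrict_apply (measurable_digitsOf p hS)]
  rfl

theorem pim_ne_iff (p : ℕ) (hp : 3 ≤ p) (m j : ℕ) :
    pim p m j ≠ 0 ↔ j ∈ Set.range (fun n => Wsum p n m) := by
  have hp2 : 2 ≤ p := by omega
  constructor
  · intro hne
    rw [pim_eq] at hne
    obtain ⟨u, hu1, hu2⟩ := MeasureTheory.nonempty_of_measure_ne_zero hne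
    simp only [Set.mem_preimage, Set.mem_singleton_iff] at hu1
    obtain ⟨t, ht0, htd⟩ := exists_digit_lt p hp2 u hu2.1 m
    set x := digitsOf p u with hxdef
    have hxlt : ∀ i, x i < p := by
      intro i
      exact Nat.mod_lt _ (by omega)
    set n := valx p x (t + 1) with hndef
    have hx : ∀ i ≤ t, x i = n / p ^ i % p := by
      intro i hi
      exact (valx_digit p hp2 x (t+1) (fun i' _ => hxlt i') i (by omega)).symm
    have hpt : 0 < p ^ t := Nat.pow_pos (by omega)
    have hnm : n + m + 1 ≤ p ^ (t + 1) := by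
      have h1 : valx p x t < p ^ t := valx_lt p hp2 x t (fun i' _ => hxlt i')
      have h2 : x t ≤ p - 2 := by
        have := hxlt t
        omega
      have h3 : x t * p ^ t ≤ (p - 2) * p ^ t := Nat.mul_le_mul_right _ h2
      have h4 : (p - 2) * p ^ t = p * p ^ t - 2 * p ^ t := Nat.sub_mul p 2 (p ^ t)
      have h5 : 2 * p ^ t ≤ p * p ^ t := Nat.mul_le_mul_right _ (by omega)
      have h6 : p * p ^ t = p ^ (t+1) := (pow_succ' p t).symm
      have h7 : m ≤ p ^ t := by
        have := Nat.lt_pow_self (n := t) (show 1 < p by omega)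
        omega
      have h8 : n = valx p x t + x t * p ^ t := rfl
      omega
    refine ⟨n, ?_⟩
    rw [← hu1, phiSum_eq_Wsum p hp2 x t n m hx hnm]
  · rintro ⟨n, hn⟩
    simp only at hn
    set t := n + m with htdef
    have hlt : n + m < p ^ t := Nat.lt_pow_self (n := t) (by omega)
    set K := t + 1 with hKdef
    set N := revDig p K n with hNdef
    have hNlt : N < p ^ K := revDig_lt p hp2 K n
    have hpK : (0:ℝ) < (p:ℝ) ^ K := by positivity
    have hsub : Set.Ico ((N:ℝ) / p ^ K) (((N:ℝ) + 1) / p ^ K)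
        ⊆ (fun u => phiSum p m (digitsOf p u)) ⁻¹' {j} ∩ Set.Ico (0:ℝ) 1 := by
      intro u hu
      obtain ⟨hu1, hu2⟩ := hu
      have hdig : ∀ i, i < K → digitsOf p u i = n / p ^ i % p := by
        intro i hi
        rw [digitsOf_interval p K N hp2 i hi u hu1 hu2]
        exact revDig_digit p hp2 K n i hi
      constructor
      · simp only [Set.mem_preimage, Set.mem_singleton_iff]
        rw [phiSum_eq_Wsum p hp2 (digitsOf p u) t n m
          (fun i hi => hdig i (by omega)) (by
            have : p ^ t ≤ p ^ (t+1) := Nat.pow_le_pow_right (by omega) (by omega)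
            omega)]
        exact hn
      · constructor
        · refine le_trans ?_ hu1
          positivity
        · refine lt_of_lt_of_le hu2 ?_
          rw [div_le_one hpK]
          have : ((N:ℝ) + 1) = ((N + 1 : ℕ) : ℝ) := by push_cast; ring
          rw [this]
          have hcast : ((N + 1 : ℕ) : ℝ) ≤ ((p ^ K : ℕ) : ℝ) := by
            exact_mod_cast hNlt
          calc ((N + 1 : ℕ) : ℝ) ≤ ((p ^ K : ℕ) : ℝ) := hcast
            _ = (p:ℝ) ^ K := by push_cast; ring
    have hvol : volume (Set.Ico ((N:ℝ) / p ^ K) (((N:ℝ) + 1) / p ^ K))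
        = ENNReal.ofReal (1 / (p:ℝ) ^ K) := by
      rw [Real.volume_Ico]
      congr 1
      field_simp
      ring
    have hpos : (0:ℝ) < 1 / (p:ℝ) ^ K := by positivity
    rw [pim_eq]
    intro hzero
    have hle : volume (Set.Ico ((N:ℝ) / p ^ K) (((N:ℝ) + 1) / p ^ K))
        ≤ volume ((fun u => phiSum p m (digitsOf p u)) ⁻¹' {j} ∩ Set.Ico (0:ℝ) 1) :=
      measure_mono hsub
    rw [hzero, hvol] at hle
    rw [nonpos_iff_eq_zero, ENNReal.ofReal_eq_zero] at hle
    linarith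


theorem d_eq_Esum (p : ℕ) (hp : 3 ≤ p) (m : ℕ) : d p m = Esum p m := by
  unfold d
  have hset : {j | pim p m j ≠ 0} = Set.range (fun n => Wsum p n m) := by
    ext j
    exact pim_ne_iff p hp m j
  rw [hset]
  exact sInf_Wsum p hp m


theorem sseq_eq_sFix (p : ℕ) (hp : 3 ≤ p) (m : ℕ) : sseq p m = sFix p m := by
  unfold sseq
  rw [d_eq_Esum p hp, d_eq_Esum p hp, Esum_succ]
  omega


/-- the sequence `s_j = d_{j+1} - d_j` is the fixed point of the
substitution `q ↦ b(q)` with initial value `s_0 = 0`: for every `m ≥ 0` and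
`0 ≤ i ≤ p-1`, `s_{pm+i} = b(s_m)_i`. -/
theorem statement_17 (p : ℕ) (hp : 3 ≤ p) :
    sseq p 0 = 0 ∧
    (∀ m i : ℕ, i ≤ p - 1 → sseq p (p * m + i) = blockLower (sseq p m) i) := by

  constructor
  · rw [sseq_eq_sFix p hp, sFix_zero]
  · intro m i hi
    rw [sseq_eq_sFix p hp, sseq_eq_sFix p hp, sFix_block p (by omega) m i (by omega)]


end Chacon
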